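/- Left lemma: let p = ⟨L ↩ K ↪ R⟩ be a rule of finite directed multigraphs and let ac be a condition over R. Then there exists a condition ac' over L such that for every direct transformation G ⇒_{p,g,h} H with match g : L → G and comatch h : R → H: g satisfies ac' if and only if h satisfies ac. -/

import Mathlib

/-- A directed multigraph: a set of nodes, a set of edges, and source/target maps. -/
structure MGraph : Type 1 where
  V : Type
  E : Type
  s : E → V
  t : E → V

/-- A morphism of directed multigraphs: maps on nodes and edges compatible with
sources and targets. -/
structure GraphHom (G H : MGraph) : Type where
  fV : G.V → H.V
  fE : G.E → H.E
  src : ∀ e, H.s (fE e) = fV (G.s e)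
  tgt : ∀ e, H.t (fE e) = fV (G.t e)

/-- Composition of graph morphisms. -/
def GraphHom.comp {G H K : MGraph} (g : GraphHom H K) (f : GraphHom G H) :
    GraphHom G K where
  fV := g.fV ∘ f.fV
  fE := g.fE ∘ f.fE
  src e := by simp [g.src, f.src]
  tgt e := by simp [g.tgt, f.tgt]

/-- A graph morphism is injective if it is injective on nodes and on edges. -/
def GraphHom.Injective {G H : MGraph} (f : GraphHom G H) : Prop :=
  Function.Injective f.fV ∧ Function.Injective f.fE

/-- A graph is finite if its node set and edge set are finite. -/
def MGraph.Finite (G : MGraph) : Prop :=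
  _root_.Finite G.V ∧ _root_.Finite G.E

/-- Nested graph conditions over a graph `A`: `true`, existential conditions
`∃(a, c)` along an injective morphism `a : A → C` into a finite graph `C`,
negation, and (binary) conjunction. -/
inductive Cond : MGraph → Type 1 where
  | tru (A : MGraph) : Cond A
  | ex {A C : MGraph} (a : GraphHom A C) (hC : C.Finite) (ha : a.Injective)
      (c : Cond C) : Cond A
  | not {A : MGraph} (c : Cond A) : Cond A
  | and {A : MGraph} (c₁ c₂ : Cond A) : Cond A

/-- Satisfaction of a condition over `A` by a morphism `A → G`. -/
def Sat {G : MGraph} : {A : MGraph} → GraphHom A G → Cond A → Prop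
  | _, _, Cond.tru _ => True
  | _, p, Cond.ex a _ _ c => ∃ q, GraphHom.Injective q ∧ q.comp a = p ∧ Sat q c
  | _, p, Cond.not c => ¬ Sat p c
  | _, p, Cond.and c₁ c₂ => Sat p c₁ ∧ Sat p c₂

/-- A commuting square of graph morphisms is a pushout square if it commutes and
satisfies the universal property of pushouts in the category of directed
multigraphs. -/
structure IsPushoutSq {A B C D : MGraph} (f : GraphHom A B) (g : GraphHom A C)
    (h : GraphHom B D) (i : GraphHom C D) : Prop where
  comm : h.comp f = i.comp g
  desc : ∀ {Z : MGraph} (u : GraphHom B Z) (v : GraphHom C Z), u.comp f = v.comp g →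
    ∃! w : GraphHom D Z, w.comp h = u ∧ w.comp i = v

section Aux
open Classical

theorem GraphHom.hext {G H : MGraph} {f g : GraphHom G H} (h1 : f.fV = g.fV)
    (h2 : f.fE = g.fE) : f = g := by
  cases f; cases g; simp_all

theorem hcongV {G H : MGraph} {f g : GraphHom G H} (h : f = g) (v : G.V) :
    f.fV v = g.fV v := by rw [h]

theorem hcongE {G H : MGraph} {f g : GraphHom G H} (h : f = g) (e : G.E) :
    f.fE e = g.fE e := by rw [h]

@[simp] theorem comp_fV {G H K : MGraph} (g : GraphHom H K) (f : GraphHom G H) (v : G.V) :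
    (g.comp f).fV v = g.fV (f.fV v) := rfl

@[simp] theorem comp_fE {G H K : MGraph} (g : GraphHom H K) (f : GraphHom G H) (e : G.E) :
    (g.comp f).fE e = g.fE (f.fE e) := rfl

/-- Element-level characterization data of a pushout square. -/
structure POData {A B C D : MGraph} (f : GraphHom A B) (g : GraphHom A C)
    (h : GraphHom B D) (i : GraphHom C D) : Prop where
  commV : ∀ a, h.fV (f.fV a) = i.fV (g.fV a)
  commE : ∀ e, h.fE (f.fE e) = i.fE (g.fE e)
  hinj : h.Injective
  iinj : i.Injective
  surjV : ∀ d, (∃ b, h.fV b = d) ∨ (∃ c, i.fV c = d)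
  surjE : ∀ d, (∃ b, h.fE b = d) ∨ (∃ c, i.fE c = d)
  ovV : ∀ b c, h.fV b = i.fV c → ∃ a, f.fV a = b ∧ g.fV a = c
  ovE : ∀ b c, h.fE b = i.fE c → ∃ a, f.fE a = b ∧ g.fE a = c

end Aux
section Glue
open Classical

noncomputable def glue {β γ δ ζ : Type} (hB : β → δ) (iC : γ → δ) (u : β → ζ) (v : γ → ζ)
    (surj : ∀ d, (∃ b, hB b = d) ∨ (∃ c, iC c = d)) : δ → ζ :=
  fun d => if hb : ∃ b, hB b = d then u hb.choose else v ((surj d).resolve_left hb).choose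

theorem glue_h {β γ δ ζ : Type} {hB : β → δ} {iC : γ → δ} {u : β → ζ} {v : γ → ζ}
    {surj : ∀ d, (∃ b, hB b = d) ∨ (∃ c, iC c = d)}
    (hinj : Function.Injective hB) (b : β) : glue hB iC u v surj (hB b) = u b := by
  have hb : ∃ b', hB b' = hB b := ⟨b, rfl⟩
  simp only [glue, dif_pos hb]
  exact congrArg u (hinj hb.choose_spec)

theorem glue_i {β γ δ ζ : Type} {hB : β → δ} {iC : γ → δ} {u : β → ζ} {v : γ → ζ}
    {surj : ∀ d, (∃ b, hB b = d) ∨ (∃ c, iC c = d)}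
    (iinj : Function.Injective iC)
    (hcomp : ∀ b c, hB b = iC c → u b = v c) (c : γ) :
    glue hB iC u v surj (iC c) = v c := by
  by_cases hb : ∃ b', hB b' = iC c
  · simp only [glue, dif_pos hb]
    exact hcomp _ _ hb.choose_spec
  · simp only [glue, dif_neg hb]
    exact congrArg v (iinj (((surj (iC c)).resolve_left hb).choose_spec))

end Glue

section LemA
variable {A B C D : MGraph} {f : GraphHom A B} {g : GraphHom A C}
  {h : GraphHom B D} {i : GraphHom C D}

theorem POData.toPushout (pd : POData f g h i) : IsPushoutSq f g h i := by
  constructor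
  · exact GraphHom.hext (funext pd.commV) (funext pd.commE)
  · intro Z u v huv
    have hcompV : ∀ b c, h.fV b = i.fV c → u.fV b = v.fV c := by
      intro b c hbc
      obtain ⟨a, rfl, rfl⟩ := pd.ovV b c hbc
      exact hcongV huv a
    have hcompE : ∀ b c, h.fE b = i.fE c → u.fE b = v.fE c := by
      intro b c hbc
      obtain ⟨a, rfl, rfl⟩ := pd.ovE b c hbc
      exact hcongE huv a
    refine ⟨⟨glue h.fV i.fV u.fV v.fV pd.surjV, glue h.fE i.fE u.fE v.fE pd.surjE, ?_, ?_⟩,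
      ⟨?_, ?_⟩, ?_⟩
    · intro e
      rcases pd.surjE e with ⟨b, rfl⟩ | ⟨c, rfl⟩
      · rw [glue_h pd.hinj.2, h.src, glue_h pd.hinj.1, u.src]
      · rw [glue_i pd.iinj.2 hcompE, i.src, glue_i pd.iinj.1 hcompV, v.src]
    · intro e
      rcases pd.surjE e with ⟨b, rfl⟩ | ⟨c, rfl⟩
      · rw [glue_h pd.hinj.2, h.tgt, glue_h pd.hinj.1, u.tgt]
      · rw [glue_i pd.iinj.2 hcompE, i.tgt, glue_i pd.iinj.1 hcompV, v.tgt]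
    · exact GraphHom.hext (funext fun b => glue_h (surj := pd.surjV) pd.hinj.1 b)
        (funext fun b => glue_h (surj := pd.surjE) pd.hinj.2 b)
    · exact GraphHom.hext (funext fun c => glue_i (surj := pd.surjV) pd.iinj.1 hcompV c)
        (funext fun c => glue_i (surj := pd.surjE) pd.iinj.2 hcompE c)
    · rintro w ⟨hw1, hw2⟩
      refine GraphHom.hext (funext fun d => ?_) (funext fun d => ?_)
      · rcases pd.surjV d with ⟨b, rfl⟩ | ⟨c, rfl⟩
        · exact (hcongV hw1 b).trans (glue_h (surj := pd.surjV) pd.hinj.1 b).symm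
        · exact (hcongV hw2 c).trans (glue_i (surj := pd.surjV) pd.iinj.1 hcompV c).symm
      · rcases pd.surjE d with ⟨b, rfl⟩ | ⟨c, rfl⟩
        · exact (hcongE hw1 b).trans (glue_h (surj := pd.surjE) pd.hinj.2 b).symm
        · exact (hcongE hw2 c).trans (glue_i (surj := pd.surjE) pd.iinj.2 hcompE c).symm

end LemA
section ConcretePO
open Classical

variable {A B C : MGraph} (f : GraphHom A B) (g : GraphHom A C)

noncomputable def poMap {α β γ : Type} (ff : α → β) (gg : α → γ) :
    β → γ ⊕ {b : β // ∀ x, ff x ≠ b} :=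
  fun b => if h : ∃ x, ff x = b then Sum.inl (gg h.choose)
           else Sum.inr ⟨b, fun x hx => h ⟨x, hx⟩⟩

theorem poMap_inl {α β γ : Type} {ff : α → β} {gg : α → γ} (hf : Function.Injective ff)
    (x : α) : poMap ff gg (ff x) = Sum.inl (gg x) := by
  have hx : ∃ x', ff x' = ff x := ⟨x, rfl⟩
  simp only [poMap, dif_pos hx]
  exact congrArg _ (congrArg gg (hf hx.choose_spec))

theorem poMap_inr {α β γ : Type} {ff : α → β} {gg : α → γ} {b : β}
    (hb : ∀ x, ff x ≠ b) : poMap ff gg b = Sum.inr ⟨b, hb⟩ := by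
  have : ¬ ∃ x, ff x = b := fun ⟨x, hx⟩ => hb x hx
  simp only [poMap, dif_neg this]

theorem poMap_inj {α β γ : Type} {ff : α → β} {gg : α → γ} (hf : Function.Injective ff)
    (hg : Function.Injective gg) : Function.Injective (poMap ff gg) := by
  intro b b' hbb
  by_cases hb : ∃ x, ff x = b <;> by_cases hb' : ∃ x, ff x = b'
  · obtain ⟨x, rfl⟩ := hb; obtain ⟨x', rfl⟩ := hb'
    rw [poMap_inl hf, poMap_inl hf] at hbb
    exact congrArg ff (hg (Sum.inl.inj hbb))
  · obtain ⟨x, rfl⟩ := hb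
    rw [poMap_inl hf, poMap_inr (fun x hx => hb' ⟨x, hx⟩)] at hbb
    exact absurd hbb (by simp)
  · obtain ⟨x', rfl⟩ := hb'
    rw [poMap_inr (fun x hx => hb ⟨x, hx⟩), poMap_inl hf] at hbb
    exact absurd hbb (by simp)
  · rw [poMap_inr (fun x hx => hb ⟨x, hx⟩), poMap_inr (fun x hx => hb' ⟨x, hx⟩)] at hbb
    exact Subtype.mk.injEq .. ▸ (Sum.inr.inj hbb)

noncomputable def POGraph : MGraph where
  V := C.V ⊕ {b : B.V // ∀ x, f.fV x ≠ b}
  E := C.E ⊕ {e : B.E // ∀ x, f.fE x ≠ e}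
  s := Sum.elim (fun e => Sum.inl (C.s e)) (fun e => poMap f.fV g.fV (B.s e.1))
  t := Sum.elim (fun e => Sum.inl (C.t e)) (fun e => poMap f.fV g.fV (B.t e.1))

noncomputable def poB (hf : f.Injective) : GraphHom B (POGraph f g) where
  fV := poMap f.fV g.fV
  fE := poMap f.fE g.fE
  src e := by
    by_cases he : ∃ x, f.fE x = e
    · obtain ⟨x, rfl⟩ := he
      rw [poMap_inl hf.2]
      show Sum.inl (C.s (g.fE x)) = _
      rw [g.src, f.src, poMap_inl hf.1]
    · rw [poMap_inr (fun x hx => he ⟨x, hx⟩)]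
      rfl
  tgt e := by
    by_cases he : ∃ x, f.fE x = e
    · obtain ⟨x, rfl⟩ := he
      rw [poMap_inl hf.2]
      show Sum.inl (C.t (g.fE x)) = _
      rw [g.tgt, f.tgt, poMap_inl hf.1]
    · rw [poMap_inr (fun x hx => he ⟨x, hx⟩)]
      rfl

noncomputable def poC : GraphHom C (POGraph f g) where
  fV := Sum.inl
  fE := Sum.inl
  src e := rfl
  tgt e := rfl

theorem poData (hf : f.Injective) (hg : g.Injective) :
    POData f g (poB f g hf) (poC f g) := by
  have ovV : ∀ b c, (poB f g hf).fV b = (poC f g).fV c →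
      ∃ a, f.fV a = b ∧ g.fV a = c := by
    intro b c hbc
    by_cases hb : ∃ x, f.fV x = b
    · obtain ⟨x, rfl⟩ := hb
      rw [show (poB f g hf).fV (f.fV x) = Sum.inl (g.fV x) from poMap_inl hf.1 x] at hbc
      exact ⟨x, rfl, Sum.inl.inj hbc⟩
    · rw [show (poB f g hf).fV b = _ from poMap_inr (fun x hx => hb ⟨x, hx⟩)] at hbc
      exact absurd hbc (by simp [poC])
  have ovE : ∀ b c, (poB f g hf).fE b = (poC f g).fE c →
      ∃ a, f.fE a = b ∧ g.fE a = c := by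
    intro b c hbc
    by_cases hb : ∃ x, f.fE x = b
    · obtain ⟨x, rfl⟩ := hb
      rw [show (poB f g hf).fE (f.fE x) = Sum.inl (g.fE x) from poMap_inl hf.2 x] at hbc
      exact ⟨x, rfl, Sum.inl.inj hbc⟩
    · rw [show (poB f g hf).fE b = _ from poMap_inr (fun x hx => hb ⟨x, hx⟩)] at hbc
      exact absurd hbc (by simp [poC])
  refine ⟨fun a => poMap_inl hf.1 a, fun e => poMap_inl hf.2 e,
    ⟨poMap_inj hf.1 hg.1, poMap_inj hf.2 hg.2⟩,
    ⟨Sum.inl_injective, Sum.inl_injective⟩, ?_, ?_, ovV, ovE⟩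
  · rintro (c | ⟨b, hb⟩)
    · exact Or.inr ⟨c, rfl⟩
    · exact Or.inl ⟨b, poMap_inr hb⟩
  · rintro (c | ⟨b, hb⟩)
    · exact Or.inr ⟨c, rfl⟩
    · exact Or.inl ⟨b, poMap_inr hb⟩

theorem POGraph_finite (hB : B.Finite) (hC : C.Finite) : (POGraph f g).Finite := by
  obtain ⟨hBV, hBE⟩ := hB
  obtain ⟨hCV, hCE⟩ := hC
  have := hBV; have := hBE; have := hCV; have := hCE
  constructor
  · show _root_.Finite (C.V ⊕ {b : B.V // ∀ x, f.fV x ≠ b})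
    infer_instance
  · show _root_.Finite (C.E ⊕ {e : B.E // ∀ x, f.fE x ≠ e})
    infer_instance

end ConcretePO
section LemB

theorem GraphHom.comp_assoc {G1 G2 G3 G4 : MGraph} (h : GraphHom G3 G4)
    (g : GraphHom G2 G3) (f : GraphHom G1 G2) :
    (h.comp g).comp f = h.comp (g.comp f) := rfl

def GraphHom.gid (G : MGraph) : GraphHom G G := ⟨id, id, fun _ => rfl, fun _ => rfl⟩

theorem gid_comp {G H : MGraph} (f : GraphHom G H) : (GraphHom.gid H).comp f = f := by
  apply GraphHom.hext <;> rfl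

theorem comp_gid {G H : MGraph} (f : GraphHom G H) : f.comp (GraphHom.gid G) = f := by
  apply GraphHom.hext <;> rfl

theorem IsPushoutSq.toPOData {A B C D : MGraph} {f : GraphHom A B} {g : GraphHom A C}
    {h : GraphHom B D} {i : GraphHom C D} (sq : IsPushoutSq f g h i)
    (hf : f.Injective) (hg : g.Injective) : POData f g h i := by
  classical
  set P := POGraph f g with hP
  have pd : POData f g (poB f g hf) (poC f g) := poData f g hf hg
  have poPO : IsPushoutSq f g (poB f g hf) (poC f g) := pd.toPushout
  have pcomm : (poB f g hf).comp f = (poC f g).comp g :=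
    GraphHom.hext (funext pd.commV) (funext pd.commE)
  obtain ⟨ψ, ⟨hψ1, hψ2⟩, _⟩ := sq.desc (poB f g hf) (poC f g) pcomm
  obtain ⟨φ, ⟨hφ1, hφ2⟩, _⟩ := poPO.desc h i sq.comm
  -- φ ∘ ψ = id on D
  have hinvD : φ.comp ψ = GraphHom.gid D := by
    obtain ⟨w, _, hwu⟩ := sq.desc h i sq.comm
    have h1 : (φ.comp ψ).comp h = h ∧ (φ.comp ψ).comp i = i := by
      constructor
      · rw [GraphHom.comp_assoc, hψ1, hφ1]
      · rw [GraphHom.comp_assoc, hψ2, hφ2]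
    have h2 : (GraphHom.gid D).comp h = h ∧ (GraphHom.gid D).comp i = i :=
      ⟨gid_comp h, gid_comp i⟩
    rw [hwu _ h1, hwu _ h2]
  have hinvP : ψ.comp φ = GraphHom.gid P := by
    obtain ⟨w, _, hwu⟩ := poPO.desc (poB f g hf) (poC f g) pcomm
    have h1 : (ψ.comp φ).comp (poB f g hf) = poB f g hf ∧
        (ψ.comp φ).comp (poC f g) = poC f g := by
      constructor
      · rw [GraphHom.comp_assoc, hφ1, hψ1]
      · rw [GraphHom.comp_assoc, hφ2, hψ2]
    have h2 : (GraphHom.gid P).comp (poB f g hf) = poB f g hf ∧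
        (GraphHom.gid P).comp (poC f g) = poC f g := ⟨gid_comp _, gid_comp _⟩
    rw [hwu _ h1, hwu _ h2]
  have φVψV : ∀ d, φ.fV (ψ.fV d) = d := fun d => hcongV hinvD d
  have φEψE : ∀ d, φ.fE (ψ.fE d) = d := fun d => hcongE hinvD d
  have ψVφV : ∀ p, ψ.fV (φ.fV p) = p := fun p => hcongV hinvP p
  have ψEφE : ∀ p, ψ.fE (φ.fE p) = p := fun p => hcongE hinvP p
  have hφinjV : Function.Injective φ.fV := Function.LeftInverse.injective ψVφV
  have hφinjE : Function.Injective φ.fE := Function.LeftInverse.injective ψEφE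
  have hhV : ∀ b, h.fV b = φ.fV ((poB f g hf).fV b) := fun b => (hcongV hφ1 b).symm
  have hhE : ∀ b, h.fE b = φ.fE ((poB f g hf).fE b) := fun b => (hcongE hφ1 b).symm
  have hiV : ∀ c, i.fV c = φ.fV ((poC f g).fV c) := fun c => (hcongV hφ2 c).symm
  have hiE : ∀ c, i.fE c = φ.fE ((poC f g).fE c) := fun c => (hcongE hφ2 c).symm
  refine ⟨fun a => hcongV sq.comm a, fun e => hcongE sq.comm e, ?_, ?_, ?_, ?_, ?_, ?_⟩
  · exact ⟨fun b b' hb => pd.hinj.1 (hφinjV (by rw [← hhV, ← hhV, hb])),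
      fun b b' hb => pd.hinj.2 (hφinjE (by rw [← hhE, ← hhE, hb]))⟩
  · exact ⟨fun c c' hc => pd.iinj.1 (hφinjV (by rw [← hiV, ← hiV, hc])),
      fun c c' hc => pd.iinj.2 (hφinjE (by rw [← hiE, ← hiE, hc]))⟩
  · intro d
    rcases pd.surjV (ψ.fV d) with ⟨b, hb⟩ | ⟨c, hc⟩
    · exact Or.inl ⟨b, by rw [hhV, hb, φVψV]⟩
    · exact Or.inr ⟨c, by rw [hiV, hc, φVψV]⟩
  · intro d
    rcases pd.surjE (ψ.fE d) with ⟨b, hb⟩ | ⟨c, hc⟩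
    · exact Or.inl ⟨b, by rw [hhE, hb, φEψE]⟩
    · exact Or.inr ⟨c, by rw [hiE, hc, φEψE]⟩
  · intro b c hbc
    refine pd.ovV b c ?_
    have := congrArg ψ.fV hbc
    rw [hhV, hiV, ψVφV, ψVφV] at this
    exact this
  · intro b c hbc
    refine pd.ovE b c ?_
    have := congrArg ψ.fE hbc
    rw [hhE, hiE, ψEφE, ψEφE] at this
    exact this

end LemB
section Compl
open Classical

variable {K R C : MGraph} (r : GraphHom K R) (a : GraphHom R C)

/-- An element is kept if every `aa`-preimage comes from the interface. -/
def KeepF {κ ρ γ : Type} (rr : κ → ρ) (aa : ρ → γ) (v : γ) : Prop :=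
  ∀ x, aa x = v → ∃ k0, rr k0 = x

theorem notKeepF {κ ρ γ : Type} {rr : κ → ρ} {aa : ρ → γ} {v : γ}
    (hv : ¬ KeepF rr aa v) : ∃ x, aa x = v ∧ ∀ k0, rr k0 ≠ x := by
  simp only [KeepF, not_forall] at hv
  obtain ⟨x, hx, hk⟩ := hv
  exact ⟨x, hx, fun k0 hk0 => hk ⟨k0, hk0⟩⟩

/-- A node of `C` is kept if every `a`-preimage comes from `K`. -/
def KeepV (v : C.V) : Prop := KeepF r.fV a.fV v

def KeepE (e : C.E) : Prop := KeepF r.fE a.fE e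

/-- The dangling condition. -/
def Dangling : Prop := ∀ e, KeepE r a e → KeepV r a (C.s e) ∧ KeepV r a (C.t e)

variable (hd : Dangling r a)

def Ygraph : MGraph where
  V := {v : C.V // KeepV r a v}
  E := {e : C.E // KeepE r a e}
  s := fun e => ⟨C.s e.1, (hd e.1 e.2).1⟩
  t := fun e => ⟨C.t e.1, (hd e.1 e.2).2⟩

def incY : GraphHom (Ygraph r a hd) C :=
  ⟨Subtype.val, Subtype.val, fun _ => rfl, fun _ => rfl⟩

theorem incY_inj : (incY r a hd).Injective :=
  ⟨fun _ _ hx => Subtype.ext hx, fun _ _ hx => Subtype.ext hx⟩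

variable (ha : a.Injective)

def yK : GraphHom K (Ygraph r a hd) where
  fV := fun k0 => ⟨a.fV (r.fV k0), fun x hx => ⟨k0, (ha.1 hx).symm⟩⟩
  fE := fun k0 => ⟨a.fE (r.fE k0), fun x hx => ⟨k0, (ha.2 hx).symm⟩⟩
  src e := by
    apply Subtype.ext
    show C.s (a.fE (r.fE e)) = a.fV (r.fV (K.s e))
    rw [a.src, r.src]
  tgt e := by
    apply Subtype.ext
    show C.t (a.fE (r.fE e)) = a.fV (r.fV (K.t e))
    rw [a.tgt, r.tgt]

theorem yK_inj (hr : r.Injective) : (yK r a hd ha).Injective :=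
  ⟨fun k k' hk => hr.1 (ha.1 (congrArg Subtype.val hk)),
   fun k k' hk => hr.2 (ha.2 (congrArg Subtype.val hk))⟩

theorem Ygraph_finite (hC : C.Finite) : (Ygraph r a hd).Finite := by
  obtain ⟨h1, h2⟩ := hC
  have := h1; have := h2
  exact ⟨Subtype.finite, Subtype.finite⟩

theorem notKeepV {v : C.V} (hv : ¬ KeepV r a v) :
    ∃ x, a.fV x = v ∧ ∀ k0, r.fV k0 ≠ x := notKeepF hv

theorem notKeepE {e : C.E} (he : ¬ KeepE r a e) :
    ∃ x, a.fE x = e ∧ ∀ k0, r.fE k0 ≠ x := notKeepF he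

end Compl
section LcDef
open Classical

noncomputable def Lc : {R : MGraph} → Cond R → ∀ (K L : MGraph) (l : GraphHom K L),
    l.Injective → L.Finite → ∀ (r : GraphHom K R), r.Injective → Cond L
  | _, .tru _, _, L, _, _, _, _, _ => .tru L
  | _, .not c, K, L, l, hl, hLf, r, hr => .not (Lc c K L l hl hLf r hr)
  | _, .and c₁ c₂, K, L, l, hl, hLf, r, hr =>
      .and (Lc c₁ K L l hl hLf r hr) (Lc c₂ K L l hl hLf r hr)
  | _, .ex a hC ha c, K, L, l, hl, hLf, r, hr =>
      if hd : Dangling r a then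
        have hy := yK_inj r a hd ha hr
        Cond.ex (poB l (yK r a hd ha) hl)
          (POGraph_finite l (yK r a hd ha) hLf (Ygraph_finite r a hd hC))
          (poData l (yK r a hd ha) hl hy).hinj
          (Lc c (Ygraph r a hd) (POGraph l (yK r a hd ha)) (poC l (yK r a hd ha))
            (poData l (yK r a hd ha) hl hy).iinj
            (POGraph_finite l (yK r a hd ha) hLf (Ygraph_finite r a hd hC))
            (incY r a hd) (incY_inj r a hd))
      else .not (.tru L)

end LcDef
section Factor
open Classical

/-- Factor a morphism through an injective morphism whose image contains its image. -/
theorem factor {X D G : MGraph} (m : GraphHom X G) (dG : GraphHom D G)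
    (hdG : dG.Injective) (hV : ∀ x, ∃ d, dG.fV d = m.fV x)
    (hE : ∀ e, ∃ d, dG.fE d = m.fE e) :
    ∃ w : GraphHom X D, dG.comp w = m := by
  have sV : ∀ x, dG.fV ((hV x).choose) = m.fV x := fun x => (hV x).choose_spec
  have sE : ∀ e, dG.fE ((hE e).choose) = m.fE e := fun e => (hE e).choose_spec
  refine ⟨⟨fun x => (hV x).choose, fun e => (hE e).choose, ?_, ?_⟩, ?_⟩
  · intro e
    apply hdG.1
    rw [← dG.src, sE, m.src, sV]
  · intro e
    apply hdG.1
    rw [← dG.tgt, sE, m.tgt, sV]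
  · exact GraphHom.hext (funext sV) (funext sE)

theorem comp_injective {X D G : MGraph} {m : GraphHom X D} {dG : GraphHom D G}
    (hc : (dG.comp m).Injective) : m.Injective :=
  ⟨fun x x' hx => hc.1 (by simp [hx]), fun x x' hx => hc.2 (by simp [hx])⟩

theorem inj_comp {X D G : MGraph} {m : GraphHom X D} {dG : GraphHom D G}
    (hm : m.Injective) (hdG : dG.Injective) : (dG.comp m).Injective :=
  ⟨fun x x' hx => hm.1 (hdG.1 hx), fun x x' hx => hm.2 (hdG.2 hx)⟩

end Factor
section MkPD
open Classical

variable {K R C : MGraph} (r : GraphHom K R) (a : GraphHom R C) (hd : Dangling r a)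
  (ha : a.Injective)

theorem mkPD1 {L D G : MGraph} (l : GraphHom K L) (hl : l.Injective)
    {k : GraphHom K D} {g : GraphHom L G} {dG : GraphHom D G}
    (pd1 : POData l k g dG)
    (w : GraphHom (Ygraph r a hd) D) (Q : GraphHom (POGraph l (yK r a hd ha)) G)
    (hQinj : Q.Injective)
    (hQb : Q.comp (poB l (yK r a hd ha) hl) = g)
    (hQw : Q.comp (poC l (yK r a hd ha)) = dG.comp w) :
    POData (poC l (yK r a hd ha)) w Q dG := by
  refine ⟨fun v => hcongV hQw v, fun e => hcongE hQw e, hQinj, pd1.iinj, ?_, ?_, ?_, ?_⟩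
  · intro gg
    rcases pd1.surjV gg with ⟨x, hx⟩ | ⟨d, hdd⟩
    · exact Or.inl ⟨(poB l (yK r a hd ha) hl).fV x, (hcongV hQb x).trans hx⟩
    · exact Or.inr ⟨d, hdd⟩
  · intro gg
    rcases pd1.surjE gg with ⟨x, hx⟩ | ⟨d, hdd⟩
    · exact Or.inl ⟨(poB l (yK r a hd ha) hl).fE x, (hcongE hQb x).trans hx⟩
    · exact Or.inr ⟨d, hdd⟩
  · rintro (y₀ | ⟨x, hx⟩) c' hbc
    · exact ⟨y₀, rfl, pd1.iinj.1 ((hcongV hQw y₀).symm.trans hbc)⟩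
    · exfalso
      have hbx : (poB l (yK r a hd ha) hl).fV x = Sum.inr ⟨x, hx⟩ := poMap_inr hx
      have h1 : Q.fV ((poB l (yK r a hd ha) hl).fV x) = dG.fV c' := by rw [hbx]; exact hbc
      have hgx : g.fV x = dG.fV c' := (hcongV hQb x).symm.trans h1
      obtain ⟨k₀, hk₀, -⟩ := pd1.ovV x c' hgx
      exact hx k₀ hk₀
  · rintro (y₀ | ⟨x, hx⟩) c' hbc
    · exact ⟨y₀, rfl, pd1.iinj.2 ((hcongE hQw y₀).symm.trans hbc)⟩
    · exfalso
      have hbx : (poB l (yK r a hd ha) hl).fE x = Sum.inr ⟨x, hx⟩ := poMap_inr hx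
      have h1 : Q.fE ((poB l (yK r a hd ha) hl).fE x) = dG.fE c' := by rw [hbx]; exact hbc
      have hgx : g.fE x = dG.fE c' := (hcongE hQb x).symm.trans h1
      obtain ⟨k₀, hk₀, -⟩ := pd1.ovE x c' hgx
      exact hx k₀ hk₀

theorem mkPD2 {D H : MGraph} {k : GraphHom K D} {h : GraphHom R H} {dH : GraphHom D H}
    (pd2 : POData r k h dH)
    (w : GraphHom (Ygraph r a hd) D) (q : GraphHom C H)
    (hqinj : q.Injective)
    (hqa : q.comp a = h)
    (hqw : q.comp (incY r a hd) = dH.comp w) :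
    POData (incY r a hd) w q dH := by
  refine ⟨fun v => hcongV hqw v, fun e => hcongE hqw e, hqinj, pd2.iinj, ?_, ?_, ?_, ?_⟩
  · intro hh
    rcases pd2.surjV hh with ⟨x, hx⟩ | ⟨d, hdd⟩
    · exact Or.inl ⟨a.fV x, (hcongV hqa x).trans hx⟩
    · exact Or.inr ⟨d, hdd⟩
  · intro hh
    rcases pd2.surjE hh with ⟨x, hx⟩ | ⟨d, hdd⟩
    · exact Or.inl ⟨a.fE x, (hcongE hqa x).trans hx⟩
    · exact Or.inr ⟨d, hdd⟩
  · intro c₀ d hcd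
    by_cases kc : KeepV r a c₀
    · exact ⟨⟨c₀, kc⟩, rfl, pd2.iinj.1 ((hcongV hqw ⟨c₀, kc⟩).symm.trans hcd)⟩
    · exfalso
      obtain ⟨x, hx, hxr⟩ := notKeepV r a kc
      have : h.fV x = dH.fV d := (hcongV hqa x).symm.trans (by show q.fV (a.fV x) = _; rw [hx]; exact hcd)
      obtain ⟨k₀, hk₀, -⟩ := pd2.ovV x d this
      exact hxr k₀ hk₀
  · intro c₀ d hcd
    by_cases kc : KeepE r a c₀
    · exact ⟨⟨c₀, kc⟩, rfl, pd2.iinj.2 ((hcongE hqw ⟨c₀, kc⟩).symm.trans hcd)⟩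
    · exfalso
      obtain ⟨x, hx, hxr⟩ := notKeepE r a kc
      have : h.fE x = dH.fE d := (hcongE hqa x).symm.trans (by show q.fE (a.fE x) = _; rw [hx]; exact hcd)
      obtain ⟨k₀, hk₀, -⟩ := pd2.ovE x d this
      exact hxr k₀ hk₀

end MkPD
section QF
open Classical

variable {κ ρ γ δ η : Type} (rr : κ → ρ) (aa : ρ → γ) (hh : ρ → η) (ddH : δ → η)
  (kY : {v : γ // KeepF rr aa v} → δ)

noncomputable def qF : γ → η := fun c₀ =>
  if kc : KeepF rr aa c₀ then ddH (kY ⟨c₀, kc⟩) else hh (notKeepF kc).choose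

theorem qF_keep (c₀ : γ) (kc : KeepF rr aa c₀) :
    qF rr aa hh ddH kY c₀ = ddH (kY ⟨c₀, kc⟩) := dif_pos kc

theorem qF_not (c₀ : γ) (kc : ¬ KeepF rr aa c₀) :
    qF rr aa hh ddH kY c₀ = hh (notKeepF kc).choose := dif_neg kc

theorem qF_a (hainj : Function.Injective aa) (kk : κ → δ)
    (hky : ∀ k₀ (pf : KeepF rr aa (aa (rr k₀))), kY ⟨aa (rr k₀), pf⟩ = kk k₀)
    (hcomm : ∀ k₀, hh (rr k₀) = ddH (kk k₀)) (x : ρ) :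
    qF rr aa hh ddH kY (aa x) = hh x := by
  by_cases kc : KeepF rr aa (aa x)
  · obtain ⟨k₀, hk₀⟩ := kc x rfl
    subst hk₀
    rw [qF_keep rr aa hh ddH kY _ kc, hky k₀ kc, ← hcomm k₀]
  · rw [qF_not rr aa hh ddH kY _ kc]
    exact congrArg hh (hainj (notKeepF kc).choose_spec.1)

theorem qF_inc (y₀ : {v : γ // KeepF rr aa v}) :
    qF rr aa hh ddH kY y₀.1 = ddH (kY y₀) := dif_pos y₀.2

theorem qF_inj (hainj : Function.Injective aa) (hhinj : Function.Injective hh)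
    (hdinj : Function.Injective ddH) (hkinj : Function.Injective kY)
    (ov : ∀ x d, hh x = ddH d → ∃ k₀, rr k₀ = x) :
    Function.Injective (qF rr aa hh ddH kY) := by
  intro c₀ c₁ hcc
  by_cases k0 : KeepF rr aa c₀ <;> by_cases k1 : KeepF rr aa c₁
  · rw [qF_keep rr aa hh ddH kY _ k0, qF_keep rr aa hh ddH kY _ k1] at hcc
    exact congrArg Subtype.val (hkinj (hdinj hcc))
  · rw [qF_keep rr aa hh ddH kY _ k0, qF_not rr aa hh ddH kY _ k1] at hcc
    obtain ⟨k₀, hk₀⟩ := ov _ _ hcc.symm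
    exact absurd hk₀ ((notKeepF k1).choose_spec.2 k₀)
  · rw [qF_not rr aa hh ddH kY _ k0, qF_keep rr aa hh ddH kY _ k1] at hcc
    obtain ⟨k₀, hk₀⟩ := ov _ _ hcc
    exact absurd hk₀ ((notKeepF k0).choose_spec.2 k₀)
  · rw [qF_not rr aa hh ddH kY _ k0, qF_not rr aa hh ddH kY _ k1] at hcc
    rw [← (notKeepF k0).choose_spec.1, ← (notKeepF k1).choose_spec.1]
    exact congrArg aa (hhinj hcc)

end QF

section BuildQ
open Classical

variable {K R C : MGraph} (r : GraphHom K R) (a : GraphHom R C) (hd : Dangling r a)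
  (ha : a.Injective)

theorem buildq {D H : MGraph} {k : GraphHom K D} {h : GraphHom R H} {dH : GraphHom D H}
    (pd2 : POData r k h dH)
    (k' : GraphHom (Ygraph r a hd) D) (hk'inj : k'.Injective)
    (hk'y : k'.comp (yK r a hd ha) = k) :
    ∃ q : GraphHom C H, q.Injective ∧ q.comp a = h ∧
      q.comp (incY r a hd) = dH.comp k' := by
  classical
  have qVa : ∀ x, qF r.fV a.fV h.fV dH.fV k'.fV (a.fV x) = h.fV x :=
    qF_a r.fV a.fV h.fV dH.fV k'.fV ha.1 k.fV (fun k₀ _ => hcongV hk'y k₀) pd2.commV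
  have qEa : ∀ x, qF r.fE a.fE h.fE dH.fE k'.fE (a.fE x) = h.fE x :=
    qF_a r.fE a.fE h.fE dH.fE k'.fE ha.2 k.fE (fun k₀ _ => hcongE hk'y k₀) pd2.commE
  refine ⟨⟨qF r.fV a.fV h.fV dH.fV k'.fV, qF r.fE a.fE h.fE dH.fE k'.fE, ?_, ?_⟩,
    ⟨?_, ?_⟩, ?_, ?_⟩
  · intro e
    by_cases ke : KeepE r a e
    · erw [qF_keep r.fE a.fE h.fE dH.fE k'.fE _ ke, dH.src, k'.src,
        qF_keep r.fV a.fV h.fV dH.fV k'.fV _ (hd e ke).1]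
      rfl
    · rw [qF_not r.fE a.fE h.fE dH.fE k'.fE _ ke, h.src]
      have hse := a.src (notKeepF ke).choose
      rw [(notKeepF ke).choose_spec.1] at hse
      rw [hse, qVa]
  · intro e
    by_cases ke : KeepE r a e
    · erw [qF_keep r.fE a.fE h.fE dH.fE k'.fE _ ke, dH.tgt, k'.tgt,
        qF_keep r.fV a.fV h.fV dH.fV k'.fV _ (hd e ke).2]
      rfl
    · rw [qF_not r.fE a.fE h.fE dH.fE k'.fE _ ke, h.tgt]
      have hte := a.tgt (notKeepF ke).choose
      rw [(notKeepF ke).choose_spec.1] at hte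
      rw [hte, qVa]
  · exact qF_inj r.fV a.fV h.fV dH.fV k'.fV ha.1 pd2.hinj.1 pd2.iinj.1 hk'inj.1
      (fun x d hxd => (pd2.ovV x d hxd).imp (fun k₀ hk => hk.1))
  · exact qF_inj r.fE a.fE h.fE dH.fE k'.fE ha.2 pd2.hinj.2 pd2.iinj.2 hk'inj.2
      (fun x d hxd => (pd2.ovE x d hxd).imp (fun k₀ hk => hk.1))
  · exact GraphHom.hext (funext qVa) (funext qEa)
  · exact GraphHom.hext (funext fun y₀ => qF_inc r.fV a.fV h.fV dH.fV k'.fV y₀)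
      (funext fun y₀ => qF_inc r.fE a.fE h.fE dH.fE k'.fE y₀)

theorem buildQ {L D G : MGraph} (l : GraphHom K L) (hl : l.Injective)
    {k : GraphHom K D} {g : GraphHom L G} {dG : GraphHom D G}
    (pd1 : POData l k g dG)
    (qY : GraphHom (Ygraph r a hd) D) (hqYinj : qY.Injective)
    (hqYy : qY.comp (yK r a hd ha) = k) :
    ∃ Q : GraphHom (POGraph l (yK r a hd ha)) G, Q.Injective ∧
      Q.comp (poB l (yK r a hd ha) hl) = g ∧
      Q.comp (poC l (yK r a hd ha)) = dG.comp qY := by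
  classical
  refine ⟨⟨Sum.elim (fun y₀ => dG.fV (qY.fV y₀)) (fun x => g.fV x.1),
    Sum.elim (fun e₀ => dG.fE (qY.fE e₀)) (fun x => g.fE x.1), ?_, ?_⟩,
    ⟨?_, ?_⟩, ?_, ?_⟩
  · rintro (e | ⟨e, he⟩)
    · show G.s (dG.fE (qY.fE e)) = dG.fV (qY.fV ((Ygraph r a hd).s e))
      rw [dG.src, qY.src]
    · show G.s (g.fE e) = Sum.elim _ _ (poMap l.fV (yK r a hd ha).fV (L.s e))
      by_cases hke : ∃ k₀, l.fV k₀ = L.s e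
      · obtain ⟨k₀, hk₀⟩ := hke
        rw [g.src, ← hk₀, poMap_inl hl.1]
        exact (pd1.commV k₀).trans (congrArg dG.fV (hcongV hqYy k₀)).symm
      · rw [poMap_inr (fun k₀ hk₀ => hke ⟨k₀, hk₀⟩)]
        exact g.src e
  · rintro (e | ⟨e, he⟩)
    · show G.t (dG.fE (qY.fE e)) = dG.fV (qY.fV ((Ygraph r a hd).t e))
      rw [dG.tgt, qY.tgt]
    · show G.t (g.fE e) = Sum.elim _ _ (poMap l.fV (yK r a hd ha).fV (L.t e))
      by_cases hke : ∃ k₀, l.fV k₀ = L.t e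
      · obtain ⟨k₀, hk₀⟩ := hke
        rw [g.tgt, ← hk₀, poMap_inl hl.1]
        exact (pd1.commV k₀).trans (congrArg dG.fV (hcongV hqYy k₀)).symm
      · rw [poMap_inr (fun k₀ hk₀ => hke ⟨k₀, hk₀⟩)]
        exact g.tgt e
  · rintro (y₀ | ⟨x, hx⟩) (y₁ | ⟨x', hx'⟩) hpq <;>
      simp only [Sum.elim_inl, Sum.elim_inr] at hpq
    · rw [hqYinj.1 (pd1.iinj.1 hpq)]
    · exfalso
      obtain ⟨k₀, hk₀, -⟩ := pd1.ovV x' (qY.fV y₀) hpq.symm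
      exact hx' k₀ hk₀
    · exfalso
      obtain ⟨k₀, hk₀, -⟩ := pd1.ovV x (qY.fV y₁) hpq
      exact hx k₀ hk₀
    · rw [show (⟨x, hx⟩ : {b : L.V // ∀ x, l.fV x ≠ b}) = ⟨x', hx'⟩ from
        Subtype.ext (pd1.hinj.1 hpq)]
  · rintro (y₀ | ⟨x, hx⟩) (y₁ | ⟨x', hx'⟩) hpq <;>
      simp only [Sum.elim_inl, Sum.elim_inr] at hpq
    · rw [hqYinj.2 (pd1.iinj.2 hpq)]
    · exfalso
      obtain ⟨k₀, hk₀, -⟩ := pd1.ovE x' (qY.fE y₀) hpq.symm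
      exact hx' k₀ hk₀
    · exfalso
      obtain ⟨k₀, hk₀, -⟩ := pd1.ovE x (qY.fE y₁) hpq
      exact hx k₀ hk₀
    · rw [show (⟨x, hx⟩ : {e : L.E // ∀ x, l.fE x ≠ e}) = ⟨x', hx'⟩ from
        Subtype.ext (pd1.hinj.2 hpq)]
  · refine GraphHom.hext (funext fun x => ?_) (funext fun x => ?_)
    · show Sum.elim _ _ (poMap l.fV (yK r a hd ha).fV x) = g.fV x
      by_cases hkx : ∃ k₀, l.fV k₀ = x
      · obtain ⟨k₀, rfl⟩ := hkx
        rw [poMap_inl hl.1]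
        exact (congrArg dG.fV (hcongV hqYy k₀)).trans (pd1.commV k₀).symm
      · rw [poMap_inr (fun k₀ hk₀ => hkx ⟨k₀, hk₀⟩)]
        rfl
    · show Sum.elim _ _ (poMap l.fE (yK r a hd ha).fE x) = g.fE x
      by_cases hkx : ∃ k₀, l.fE k₀ = x
      · obtain ⟨k₀, rfl⟩ := hkx
        rw [poMap_inl hl.2]
        exact (congrArg dG.fE (hcongE hqYy k₀)).trans (pd1.commE k₀).symm
      · rw [poMap_inr (fun k₀ hk₀ => hkx ⟨k₀, hk₀⟩)]
        rfl
  · exact GraphHom.hext (funext fun y₀ => rfl) (funext fun y₀ => rfl)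

end BuildQ
theorem main' {R : MGraph} (c : Cond R) :
    ∀ (K L : MGraph) (l : GraphHom K L) (hl : l.Injective) (hLf : L.Finite)
      (r : GraphHom K R) (hr : r.Injective)
      (G H D : MGraph) (g : GraphHom L G) (h : GraphHom R H) (k : GraphHom K D)
      (dG : GraphHom D G) (dH : GraphHom D H),
      POData l k g dG → POData r k h dH →
      (Sat g (Lc c K L l hl hLf r hr) ↔ Sat h c) := by
  induction c with
  | tru A =>
    intros
    simp [Lc, Sat]
  | not c ih =>
    intro K L l hl hLf r hr G H D g h k dG dH pd1 pd2
    simp only [Lc, Sat]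
    exact not_congr (ih K L l hl hLf r hr G H D g h k dG dH pd1 pd2)
  | and c₁ c₂ ih₁ ih₂ =>
    intro K L l hl hLf r hr G H D g h k dG dH pd1 pd2
    simp only [Lc, Sat]
    exact and_congr (ih₁ K L l hl hLf r hr G H D g h k dG dH pd1 pd2)
      (ih₂ K L l hl hLf r hr G H D g h k dG dH pd1 pd2)
  | ex a hC ha c ih =>
    intro K L l hl hLf r hr G H D g h k dG dH pd1 pd2
    simp only [Lc]
    by_cases hd : Dangling r a
    · rw [dif_pos hd]
      simp only [Sat]
      have hy : (yK r a hd ha).Injective := yK_inj r a hd ha hr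
      have pdb : POData l (yK r a hd ha) (poB l (yK r a hd ha) hl)
          (poC l (yK r a hd ha)) := poData l (yK r a hd ha) hl hy
      constructor
      · rintro ⟨Q, hQinj, hQb, hQsat⟩
        have exV : ∀ y₀, ∃ d, dG.fV d = (Q.comp (poC l (yK r a hd ha))).fV y₀ := by
          intro y₀
          rcases pd1.surjV (Q.fV (Sum.inl y₀)) with ⟨x, hx⟩ | ⟨d, hdd⟩
          · by_cases hkx : ∃ k₀, l.fV k₀ = x
            · obtain ⟨k₀, rfl⟩ := hkx
              exact ⟨k.fV k₀, (pd1.commV k₀).symm.trans hx⟩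
            · exfalso
              have hbx : (poB l (yK r a hd ha) hl).fV x =
                  Sum.inr ⟨x, fun k₀ hk₀ => hkx ⟨k₀, hk₀⟩⟩ := poMap_inr _
              have h1 : (poB l (yK r a hd ha) hl).fV x = Sum.inl y₀ :=
                hQinj.1 ((hcongV hQb x).trans hx)
              rw [hbx] at h1
              simp at h1
          · exact ⟨d, hdd⟩
        have exE : ∀ y₀, ∃ d, dG.fE d = (Q.comp (poC l (yK r a hd ha))).fE y₀ := by
          intro y₀
          rcases pd1.surjE (Q.fE (Sum.inl y₀)) with ⟨x, hx⟩ | ⟨d, hdd⟩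
          · by_cases hkx : ∃ k₀, l.fE k₀ = x
            · obtain ⟨k₀, rfl⟩ := hkx
              exact ⟨k.fE k₀, (pd1.commE k₀).symm.trans hx⟩
            · exfalso
              have hbx : (poB l (yK r a hd ha) hl).fE x =
                  Sum.inr ⟨x, fun k₀ hk₀ => hkx ⟨k₀, hk₀⟩⟩ := poMap_inr _
              have h1 : (poB l (yK r a hd ha) hl).fE x = Sum.inl y₀ :=
                hQinj.2 ((hcongE hQb x).trans hx)
              rw [hbx] at h1
              simp at h1
          · exact ⟨d, hdd⟩
        obtain ⟨k', hk'⟩ := factor (Q.comp (poC l (yK r a hd ha))) dG pd1.iinj exV exE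
        have hk'inj : k'.Injective :=
          comp_injective (by rw [hk']; exact inj_comp pdb.iinj hQinj)
        have hk'y : k'.comp (yK r a hd ha) = k := by
          have h2V : ∀ k₀, (poB l (yK r a hd ha) hl).fV (l.fV k₀) =
              Sum.inl ((yK r a hd ha).fV k₀) := fun k₀ => poMap_inl hl.1 k₀
          have h2E : ∀ k₀, (poB l (yK r a hd ha) hl).fE (l.fE k₀) =
              Sum.inl ((yK r a hd ha).fE k₀) := fun k₀ => poMap_inl hl.2 k₀
          refine GraphHom.hext (funext fun k₀ => pd1.iinj.1 ?_)
            (funext fun k₀ => pd1.iinj.2 ?_)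
          · calc dG.fV ((k'.comp (yK r a hd ha)).fV k₀)
                = Q.fV (Sum.inl ((yK r a hd ha).fV k₀)) := hcongV hk' _
              _ = Q.fV ((poB l (yK r a hd ha) hl).fV (l.fV k₀)) := by rw [h2V]
              _ = g.fV (l.fV k₀) := hcongV hQb _
              _ = dG.fV (k.fV k₀) := pd1.commV k₀
          · calc dG.fE ((k'.comp (yK r a hd ha)).fE k₀)
                = Q.fE (Sum.inl ((yK r a hd ha).fE k₀)) := hcongE hk' _
              _ = Q.fE ((poB l (yK r a hd ha) hl).fE (l.fE k₀)) := by rw [h2E]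
              _ = g.fE (l.fE k₀) := hcongE hQb _
              _ = dG.fE (k.fE k₀) := pd1.commE k₀
        obtain ⟨q, hqinj, hqa, hqw⟩ := buildq r a hd ha pd2 k' hk'inj hk'y
        refine ⟨q, hqinj, hqa, ?_⟩
        have pd1' := mkPD1 r a hd ha l hl pd1 k' Q hQinj hQb hk'.symm
        have pd2' := mkPD2 r a hd pd2 k' q hqinj hqa hqw
        exact (ih (Ygraph r a hd) (POGraph l (yK r a hd ha)) (poC l (yK r a hd ha))
          pdb.iinj (POGraph_finite l (yK r a hd ha) hLf (Ygraph_finite r a hd hC))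
          (incY r a hd) (incY_inj r a hd) G H D Q q k' dG dH pd1' pd2').mp hQsat
      · rintro ⟨q, hqinj, hqa, hqsat⟩
        have exV : ∀ y₀, ∃ d, dH.fV d = (q.comp (incY r a hd)).fV y₀ := by
          intro y₀
          rcases pd2.surjV (q.fV y₀.1) with ⟨x, hx⟩ | ⟨d, hdd⟩
          · have hax : a.fV x = y₀.1 := hqinj.1 ((hcongV hqa x).trans hx)
            obtain ⟨k₀, hk₀⟩ := y₀.2 x hax
            refine ⟨k.fV k₀, ?_⟩
            rw [← pd2.commV k₀, hk₀]
            exact hx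
          · exact ⟨d, hdd⟩
        have exE : ∀ y₀, ∃ d, dH.fE d = (q.comp (incY r a hd)).fE y₀ := by
          intro y₀
          rcases pd2.surjE (q.fE y₀.1) with ⟨x, hx⟩ | ⟨d, hdd⟩
          · have hax : a.fE x = y₀.1 := hqinj.2 ((hcongE hqa x).trans hx)
            obtain ⟨k₀, hk₀⟩ := y₀.2 x hax
            refine ⟨k.fE k₀, ?_⟩
            rw [← pd2.commE k₀, hk₀]
            exact hx
          · exact ⟨d, hdd⟩
        obtain ⟨qY, hqY⟩ := factor (q.comp (incY r a hd)) dH pd2.iinj exV exE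
        have hqYinj : qY.Injective :=
          comp_injective (by rw [hqY]; exact inj_comp (incY_inj r a hd) hqinj)
        have hqYy : qY.comp (yK r a hd ha) = k := by
          refine GraphHom.hext (funext fun k₀ => pd2.iinj.1 ?_)
            (funext fun k₀ => pd2.iinj.2 ?_)
          · calc dH.fV ((qY.comp (yK r a hd ha)).fV k₀)
                = q.fV (a.fV (r.fV k₀)) := hcongV hqY _
              _ = h.fV (r.fV k₀) := hcongV hqa _
              _ = dH.fV (k.fV k₀) := pd2.commV k₀
          · calc dH.fE ((qY.comp (yK r a hd ha)).fE k₀)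
                = q.fE (a.fE (r.fE k₀)) := hcongE hqY _
              _ = h.fE (r.fE k₀) := hcongE hqa _
              _ = dH.fE (k.fE k₀) := pd2.commE k₀
        obtain ⟨Q, hQinj, hQb, hQw⟩ := buildQ r a hd ha l hl pd1 qY hqYinj hqYy
        refine ⟨Q, hQinj, hQb, ?_⟩
        have pd1' := mkPD1 r a hd ha l hl pd1 qY Q hQinj hQb hQw
        have pd2' := mkPD2 r a hd pd2 qY q hqinj hqa hqY.symm
        exact (ih (Ygraph r a hd) (POGraph l (yK r a hd ha)) (poC l (yK r a hd ha))
          pdb.iinj (POGraph_finite l (yK r a hd ha) hLf (Ygraph_finite r a hd hC))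
          (incY r a hd) (incY_inj r a hd) G H D Q q qY dG dH pd1' pd2').mpr hqsat
    · rw [dif_neg hd]
      simp only [Sat, not_true, false_iff]
      rintro ⟨q, hqinj, hqa, -⟩
      apply hd
      have hqaV : ∀ x, q.fV (a.fV x) = h.fV x := fun x => hcongV hqa x
      have hqaE : ∀ x, q.fE (a.fE x) = h.fE x := fun x => hcongE hqa x
      intro e he
      constructor
      · intro x hx
        rcases pd2.surjE (q.fE e) with ⟨x₀, hx₀⟩ | ⟨d, hdq⟩
        · have : a.fE x₀ = e := hqinj.2 (by rw [hqaE, hx₀])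
          obtain ⟨k₀, hk₀⟩ := he x₀ this
          refine ⟨K.s k₀, ha.1 ?_⟩
          rw [hx, ← this, ← hk₀, a.src, r.src]
        · obtain ⟨k₀, hk₀, -⟩ := pd2.ovV x (D.s d)
            (by rw [← hqaV, hx, ← q.src, ← hdq, dH.src])
          exact ⟨k₀, hk₀⟩
      · intro x hx
        rcases pd2.surjE (q.fE e) with ⟨x₀, hx₀⟩ | ⟨d, hdq⟩
        · have : a.fE x₀ = e := hqinj.2 (by rw [hqaE, hx₀])
          obtain ⟨k₀, hk₀⟩ := he x₀ this
          refine ⟨K.t k₀, ha.1 ?_⟩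
          rw [hx, ← this, ← hk₀, a.tgt, r.tgt]
        · obtain ⟨k₀, hk₀, -⟩ := pd2.ovV x (D.t d)
            (by rw [← hqaV, hx, ← q.tgt, ← hdq, dH.tgt])
          exact ⟨k₀, hk₀⟩

/-- Left lemma: for a rule `p = ⟨L ↩l K ↪r R⟩` of finite directed multigraphs and a
condition `ac` over `R`, there is a condition `ac'` over `L` such that for every
direct transformation `G ⇒_{p,g,h} H` (two pushout squares over an intermediate
graph `D`) with injective match `g : L → G` and injective comatch `h : R → H`,
`g ⊨ ac'` iff `h ⊨ ac`. -/
theorem left_lemma {K L R : MGraph} (hL : L.Finite) (hK : K.Finite) (hR : R.Finite)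
    (l : GraphHom K L) (hl : l.Injective) (r : GraphHom K R) (hr : r.Injective)
    (ac : Cond R) :
    ∃ ac' : Cond L,
      ∀ (G H D : MGraph) (g : GraphHom L G) (h : GraphHom R H) (k : GraphHom K D)
        (dG : GraphHom D G) (dH : GraphHom D H),
        g.Injective → h.Injective →
        IsPushoutSq l k g dG → IsPushoutSq r k h dH →
        (Sat g ac' ↔ Sat h ac) := by
    refine ⟨Lc ac K L l hl hL r hr, ?_⟩
    intro G H D g h k dG dH hg hh sq1 sq2
    have hk : k.Injective := by
      have h1 : (dG.comp k).Injective := by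
        rw [← sq1.comm]
        exact inj_comp hl hg
      exact comp_injective h1
    exact main' ac K L l hl hL r hr G H D g h k dG dH
      (sq1.toPOData hl hk) (sq2.toPOData hr hk)
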